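/- With σ^2 = 1 and 0 < |h01|^2 < |h02|^2, for all P1 ∈ [0, Pcen]: d/dP1 [log2(1 + (|h01|^2*P1 + c1)/(|h01|^2*(Pcen - P1) + 1)) + log2(1 + |h02|^2*(Pcen - P1))] = (1/ln 2) * (|h01|^2 - |h02|^2) / ((|h02|^2*(Pcen - P1) + 1)*(|h01|^2*(Pcen - P1) + 1)) < 0. -/

import Mathlib

/-- Derivative computation in the proof of Lemma 3:
`d/dP1 [Z1 + R2] = (1/ln 2) (|h01|² - |h02|²) / ((|h02|²(Pcen-P1)+1)(|h01|²(Pcen-P1)+1)) < 0`. -/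
theorem stmt_5 (h01sq h02sq Pcen c1 : ℝ)
    (h1 : 0 < h01sq) (h12 : h01sq < h02sq) (hc1 : 0 ≤ c1) (hP : 0 < Pcen) :
    ∀ P1 ∈ Set.Icc (0:ℝ) Pcen,
      HasDerivAt (fun p : ℝ =>
          Real.logb 2 (1 + (h01sq * p + c1) / (h01sq * (Pcen - p) + 1))
          + Real.logb 2 (1 + h02sq * (Pcen - p)))
        ((1 / Real.log 2) * (h01sq - h02sq) /
          ((h02sq * (Pcen - P1) + 1) * (h01sq * (Pcen - P1) + 1))) P1
      ∧ (1 / Real.log 2) * (h01sq - h02sq) /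
          ((h02sq * (Pcen - P1) + 1) * (h01sq * (Pcen - P1) + 1)) < 0 := by
  intro P1 hP1
  obtain ⟨hP1l, hP1r⟩ := hP1
  have h2 : (0:ℝ) < h02sq := lt_trans h1 h12
  have hQ : 0 ≤ Pcen - P1 := by linarith
  have hd1 : 0 < h01sq * (Pcen - P1) + 1 := by nlinarith
  have hd2 : 0 < h02sq * (Pcen - P1) + 1 := by nlinarith
  have hnum : 0 < h01sq * Pcen + 1 + c1 := by nlinarith
  have hlog2 : 0 < Real.log 2 := Real.log_pos (by norm_num)
  constructor
  · -- eventual equality with simplified function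
    have hev : (fun p : ℝ =>
          Real.logb 2 (1 + (h01sq * p + c1) / (h01sq * (Pcen - p) + 1))
          + Real.logb 2 (1 + h02sq * (Pcen - p)))
        =ᶠ[nhds P1] (fun p : ℝ =>
          Real.logb 2 (h01sq * Pcen + 1 + c1) - Real.logb 2 (h01sq * (Pcen - p) + 1)
          + Real.logb 2 (1 + h02sq * (Pcen - p))) := by
      have hcont : ContinuousAt (fun p : ℝ => h01sq * (Pcen - p) + 1) P1 := by
        fun_prop
      have hev' : ∀ᶠ p in nhds P1, 0 < h01sq * (Pcen - p) + 1 :=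
        continuousAt_const.eventually_lt hcont hd1
      filter_upwards [hev'] with p hp
      have h1' : (1 : ℝ) + (h01sq * p + c1) / (h01sq * (Pcen - p) + 1)
          = (h01sq * Pcen + 1 + c1) / (h01sq * (Pcen - p) + 1) := by
        field_simp
        ring
      rw [h1', Real.logb_div (by positivity) (ne_of_gt hp)]
    rw [Filter.EventuallyEq.hasDerivAt_iff hev]
    have inner1 : HasDerivAt (fun p : ℝ => h01sq * (Pcen - p) + 1)
        (h01sq * (-1)) P1 :=
      (((hasDerivAt_id P1).const_sub Pcen).const_mul h01sq).add_const 1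
    have inner2 : HasDerivAt (fun p : ℝ => 1 + h02sq * (Pcen - p))
        (h02sq * (-1)) P1 :=
      (((hasDerivAt_id P1).const_sub Pcen).const_mul h02sq).const_add 1
    have t1 : HasDerivAt (fun p : ℝ => Real.logb 2 (h01sq * (Pcen - p) + 1))
        ((h01sq * (-1)) / (h01sq * (Pcen - P1) + 1) / Real.log 2) P1 := by
      simpa [Real.logb, div_eq_mul_inv] using
        ((inner1.log (ne_of_gt hd1)).div_const (Real.log 2))
    have t2 : HasDerivAt (fun p : ℝ => Real.logb 2 (1 + h02sq * (Pcen - p)))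
        ((h02sq * (-1)) / (1 + h02sq * (Pcen - P1)) / Real.log 2) P1 := by
      simpa [Real.logb, div_eq_mul_inv] using
        ((inner2.log (by linarith)).div_const (Real.log 2))
    have := ((hasDerivAt_const P1 (Real.logb 2 (h01sq * Pcen + 1 + c1))).sub t1).add t2
    convert this using 1
    · rfl
    have hd2' : (0:ℝ) < 1 + h02sq * (Pcen - P1) := by linarith
    field_simp
    ring
  · apply div_neg_of_neg_of_pos
    · have : h01sq - h02sq < 0 := by linarith
      have h' : 0 < 1 / Real.log 2 := by positivity
      nlinarith
    · positivity
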